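/- Let 𝓜 = (M,<,+,0,…) be a definably complete expansion of an ordered group and dim : Def(𝓜) → ℕ ∪ {−∞} a dimension function. Then dim X = 1 for every definable subset X of M having nonempty interior in the order topology. -/

import Mathlib

open FirstOrder FirstOrder.Language Set

universe u v w

namespace PaperDim

section Core

variable (L : FirstOrder.Language.{v, w}) (M : Type u) [L.Structure M]

/-- The collection of definable subsets of `M^n` (definable with parameters from `M`). -/
abbrev DefSet (n : ℕ) : Type u :=
  {X : Set (Fin n → M) // Set.Definable (Set.univ : Set M) L X}

variable {L M}

/-- A definable subset of `M^1` viewed as a subset of `M`. -/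
def asSet1 (X : Set (Fin 1 → M)) : Set M := {a : M | (fun _ => a) ∈ X}

/-- The fiber of `X ⊆ M^{n+1}` over `x ∈ M^n`, as a subset of `M^1`. -/
def fiber {n : ℕ} (X : Set (Fin (n + 1) → M)) (x : Fin n → M) : Set (Fin 1 → M) :=
  {y | Fin.snoc x (y 0) ∈ X}

/-- Condition (1) of a dimension function: `dim ∅ = -∞`, `dim {a} = 0`, `dim M = 1`.
Here `d k` is the value of the dimension function on definable subsets of `M^{k+1}`. -/
def Cond1 (d : ∀ n : ℕ, DefSet L M (n + 1) → WithBot ℕ) : Prop :=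
  (∀ X : DefSet L M 1, X.1 = ∅ → d 0 X = ⊥) ∧
  (∀ (X : DefSet L M 1) (a : M), X.1 = ({fun _ => a} : Set (Fin 1 → M)) → d 0 X = 0) ∧
  (∀ X : DefSet L M 1, X.1 = (Set.univ : Set (Fin 1 → M)) → d 0 X = 1)

/-- Condition (2)ₙ (at arity `n + 1`): `dim (X ∪ Y) = max (dim X) (dim Y)`. -/
def Cond2 (d : ∀ n : ℕ, DefSet L M (n + 1) → WithBot ℕ) (n : ℕ) : Prop :=
  ∀ X Y Z : DefSet L M (n + 1), Z.1 = X.1 ∪ Y.1 → d n Z = max (d n X) (d n Y)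

/-- Condition (3)ₙ (at arity `n + 1`): invariance under coordinate permutations. -/
def Cond3 (d : ∀ n : ℕ, DefSet L M (n + 1) → WithBot ℕ) (n : ℕ) : Prop :=
  ∀ (σ : Equiv.Perm (Fin (n + 1))) (X Y : DefSet L M (n + 1)),
    Y.1 = {y : Fin (n + 1) → M | y ∘ σ ∈ X.1} → d n Y = d n X

/-- Condition (3'): invariance under switching the two coordinates, at arity 2. -/
def Cond3' (d : ∀ n : ℕ, DefSet L M (n + 1) → WithBot ℕ) : Prop :=
  ∀ X Y : DefSet L M 2, Y.1 = {v : Fin 2 → M | ![v 1, v 0] ∈ X.1} → d 1 Y = d 1 X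

/-- Condition (4)ₙ, the addition property (at arity `n + 2`):
the set `X(i)` of points over which the fiber of `X` has dimension `i` is definable, and
`dim (X ∩ Π⁻¹(X(i))) = dim X(i) + i`. -/
def Cond4 (d : ∀ n : ℕ, DefSet L M (n + 1) → WithBot ℕ) (n : ℕ) : Prop :=
  ∀ (X : DefSet L M (n + 2)) (i : Fin 2),
    ∃ (Xi : DefSet L M (n + 1)) (W : DefSet L M (n + 2)),
      Xi.1 = {x : Fin (n + 1) → M |
        ∃ hf : Set.Definable (Set.univ : Set M) L (fiber X.1 x),
          d 0 ⟨fiber X.1 x, hf⟩ = ((i : ℕ) : WithBot ℕ)} ∧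
      W.1 = X.1 ∩ (fun z : Fin (n + 2) → M => z ∘ Fin.castSucc) ⁻¹' Xi.1 ∧
      d (n + 1) W = d n Xi + ((i : ℕ) : WithBot ℕ)

/-- A dimension function on the structure `M` (van den Dries). -/
def IsDimFun (d : ∀ n : ℕ, DefSet L M (n + 1) → WithBot ℕ) : Prop :=
  Cond1 d ∧ (∀ n, Cond2 d n) ∧ (∀ n, Cond3 d n) ∧ (∀ n, Cond4 d n)

/-- A weak dimension function: conditions (1), (2)₁, (3') and (4)ₙ for all `n > 1`. -/
def IsWeakDimFun (d : ∀ n : ℕ, DefSet L M (n + 1) → WithBot ℕ) : Prop :=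
  Cond1 d ∧ Cond2 d 0 ∧ Cond3' d ∧ (∀ n, Cond4 d n)

variable (L M)

/-- The set `DIM(M)` of dimension functions on `M`. -/
def DimFuns : Set (∀ n : ℕ, DefSet L M (n + 1) → WithBot ℕ) := {d | IsDimFun d}

/-- `𝔫_dim(M)`: the cardinality of the set of dimension functions on `M`. -/
noncomputable def nDim : Cardinal := Cardinal.mk (DimFuns L M)

/-- The order `<` is definable in the structure. -/
def LtDefinable [LT M] : Prop :=
  Set.Definable (Set.univ : Set M) L {v : Fin 2 → M | v 0 < v 1}

/-- The graph of addition is definable in the structure. -/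
def AddDefinable [Add M] : Prop :=
  Set.Definable (Set.univ : Set M) L {v : Fin 3 → M | v 0 + v 1 = v 2}

/-- The graph of multiplication is definable in the structure. -/
def MulDefinable [Mul M] : Prop :=
  Set.Definable (Set.univ : Set M) L {v : Fin 3 → M | v 0 * v 1 = v 2}

end Core

/-- The order topology on a linear order, generated by open rays. -/
def orderTop (α : Type*) [LinearOrder α] : TopologicalSpace α :=
  TopologicalSpace.generateFrom {s : Set α | (∃ a, s = Set.Ioi a) ∨ (∃ a, s = Set.Iio a)}

/-- A set is discrete (w.r.t. a topology `t`) if all of its points are isolated in it. -/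
def DiscreteIn {α : Type*} (t : TopologicalSpace α) (D : Set α) : Prop :=
  ∀ x ∈ D, ∃ U : Set α, t.IsOpen U ∧ U ∩ D = {x}

/-- An open interval: a nonempty set of the form `(a, b)` with `a, b ∈ M ∪ {±∞}`. -/
def IsOpenInterval {α : Type*} [Preorder α] (S : Set α) : Prop :=
  S.Nonempty ∧ ((∃ a b, S = Set.Ioo a b) ∨ (∃ a, S = Set.Ioi a) ∨
    (∃ b, S = Set.Iio b) ∨ S = Set.univ)

section Ord

variable (L : FirstOrder.Language.{v, w}) (M : Type u) [L.Structure M]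

/-- O-minimality: every definable subset of `M` is a union of a finite set and finitely many
open intervals. -/
def OMinimal [LinearOrder M] : Prop :=
  ∀ X : DefSet L M 1, ∃ (F : Set M) (k : ℕ) (C : Fin k → Set M),
    F.Finite ∧ (∀ i, IsOpenInterval (C i)) ∧ asSet1 X.1 = F ∪ ⋃ i, C i

/-- Weak o-minimality: every definable subset of `M` is a union of finitely many convex sets. -/
def WeaklyOMinimal [LinearOrder M] : Prop :=
  ∀ X : DefSet L M 1, ∃ (k : ℕ) (C : Fin k → Set M),
    (∀ i, (C i).OrdConnected) ∧ asSet1 X.1 = ⋃ i, C i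

/-- Definable completeness: every definable subset of `M` has a supremum and an infimum in
`M ∪ {±∞}`. -/
def DefinablyComplete [LinearOrder M] : Prop :=
  ∀ X : DefSet L M 1,
    ((asSet1 X.1).Nonempty → BddAbove (asSet1 X.1) → ∃ a, IsLUB (asSet1 X.1) a) ∧
    ((asSet1 X.1).Nonempty → BddBelow (asSet1 X.1) → ∃ a, IsGLB (asSet1 X.1) a)

/-- d-minimality: the structure is definably complete and in every elementarily equivalent
structure, every definable subset of the universe is a union of an open set and finitely many
discrete sets. The linear order is assumed to be the interpretation of the relation symbol `lt`. -/
def DMinimal [LinearOrder M] (lt : L.Relations 2) : Prop :=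
  DefinablyComplete L M ∧
  ∀ (N : Type u) [L.Structure N] [LinearOrder N],
    (∀ a b : N, Structure.RelMap lt ![a, b] ↔ a < b) →
    L.ElementarilyEquivalent M N →
    ∀ X : DefSet L N 1,
      ∃ (U : Set N) (k : ℕ) (D : Fin k → Set N),
        (orderTop N).IsOpen U ∧ (∀ i, DiscreteIn (orderTop N) (D i)) ∧
        asSet1 X.1 = U ∪ ⋃ i, D i

end Ord

open scoped Classical in
/-- The topological dimension of a definable set: the largest `d` such that the image of the
set under some coordinate projection `M^n → M^d` has nonempty interior (w.r.t. the order
topology and the corresponding product topologies). -/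
noncomputable def dimTop {M : Type u} [LinearOrder M] {n : ℕ} (X : Set (Fin n → M)) :
    WithBot ℕ :=
  if X = ∅ then ⊥
  else
    ↑(sSup {d : ℕ | ∃ f : Fin d → Fin n, Function.Injective f ∧
      (@interior (Fin d → M) (@Pi.topologicalSpace (Fin d) (fun _ => M) (fun _ => orderTop M))
        ((fun x : Fin n → M => x ∘ f) '' X)).Nonempty})


/-! ### Extra notions -/

/-- `G ⊆ M²` is the graph of a bijection from `A` onto `B`. -/
def IsDefBijectionGraph {M : Type u} (G : Set (Fin 2 → M)) (A B : Set M) : Prop :=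
  (∀ v ∈ G, v 0 ∈ A ∧ v 1 ∈ B) ∧
  (∀ x ∈ A, ∃! y : M, (![x, y] : Fin 2 → M) ∈ G) ∧
  (∀ y ∈ B, ∃! x : M, (![x, y] : Fin 2 → M) ∈ G)

section Extra

variable (L : FirstOrder.Language.{v, w}) (M : Type u) [L.Structure M]

/-- A definable set `I ⊆ M` is self-sufficient if it is infinite and there is no definable
bijection between an infinite definable subset of `I` and an infinite definable subset of
`M ∖ I`. -/
def SelfSufficient (I : Set M) : Prop :=
  I.Infinite ∧
  ∀ J₁ J₂ : DefSet L M 1, asSet1 J₁.1 ⊆ I → asSet1 J₂.1 ⊆ Iᶜ →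
    (asSet1 J₁.1).Infinite → (asSet1 J₂.1).Infinite →
    ¬ ∃ G : DefSet L M 2, IsDefBijectionGraph G.1 (asSet1 J₁.1) (asSet1 J₂.1)

/-- A self-sufficient set is minimally self-sufficient if every self-sufficient set either
meets it in a finite set or contains it up to a finite set. -/
def MinimallySelfSufficient (I : Set M) : Prop :=
  SelfSufficient L M I ∧
  ∀ X : DefSet L M 1, SelfSufficient L M (asSet1 X.1) →
    (I ∩ asSet1 X.1).Finite ∨ ∃ F : Set M, F.Finite ∧ I ⊆ asSet1 X.1 ∪ F

end Extra

/-- `I₁ ∼_fin I₂`: the symmetric difference is finite. -/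
def FinSymmDiff {M : Type u} (A B : Set M) : Prop := ((A \ B) ∪ (B \ A)).Finite

/-- `I⟨τ⟩`: the product of copies of `I` (where `τ i = false`) and `M ∖ I`
(where `τ i = true`). -/
def Itau {M : Type u} (I : Set M) {n : ℕ} (τ : Fin n → Bool) : Set (Fin n → M) :=
  {v | ∀ i, if τ i then v i ∉ I else v i ∈ I}

open scoped Classical in
/-- The value of `Dim[I]` on a (nonempty) definable set contained in `I⟨τ⟩`. -/
noncomputable def DimIPiece {M : Type u} [LinearOrder M] (I : Set M) :
    (n : ℕ) → (Fin (n + 1) → Bool) → Set (Fin (n + 1) → M) → WithBot ℕ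
  | 0, τ, X =>
    if X = ∅ then ⊥ else if τ 0 then 0 else dimTop X
  | n + 1, τ, X =>
    if X = ∅ then ⊥
    else if τ (Fin.last (n + 1)) then
      DimIPiece I n (fun i => τ i.castSucc)
        ((fun v : Fin (n + 2) → M => v ∘ Fin.castSucc) '' X)
    else
      max (dimTop {x : Fin (n + 1) → M |
              (∃ v ∈ X, v ∘ Fin.castSucc = x) ∧ dimTop (fiber X x) ≠ 1})
        (dimTop {x : Fin (n + 1) → M | dimTop (fiber X x) = 1} + 1)

/-- The function `Dim[I]` associated with a subset `I` of `M` (the input dimension being the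
topological dimension). -/
noncomputable def DimI {M : Type u} [LinearOrder M] (I : Set M) (n : ℕ)
    (X : Set (Fin (n + 1) → M)) : WithBot ℕ :=
  Finset.univ.sup fun τ : Fin (n + 1) → Bool => DimIPiece I n τ (X ∩ Itau I τ)

section Morley

variable (L : FirstOrder.Language.{v, w}) (M : Type u) [L.Structure M]

/-- The model-theoretic algebraic closure of a set of parameters `A`. -/
def aclS (A : Set M) : Set M :=
  {a : M | ∃ s : Set (Fin 1 → M), Set.Definable A L s ∧ s.Finite ∧ (fun _ => a) ∈ s}

open scoped Classical in
/-- The rank `rk^acl(X/A)`: the largest cardinality of a subset of the coordinates of a point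
of `X` that is `acl`-independent over `A` (and `-∞` for `X = ∅`). -/
noncomputable def rkOver {n : ℕ} (A : Set M) (X : Set (Fin n → M)) : WithBot ℕ :=
  if X = ∅ then ⊥
  else
    ↑(sSup {k : ℕ | ∃ x ∈ X, ∃ S : Finset (Fin n), S.card = k ∧
        ∀ i ∈ S, x i ∉ aclS L M (A ∪ x '' {j : Fin n | j ∈ S ∧ j ≠ i})})

/-- A structure is minimal if every definable subset of the universe is finite or cofinite. -/
def MinimalStr : Prop :=
  ∀ X : DefSet L M 1, (asSet1 X.1).Finite ∨ ((asSet1 X.1)ᶜ : Set M).Finite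

/-- A structure is strongly minimal if every elementarily equivalent structure is minimal. -/
def StronglyMinimal : Prop :=
  MinimalStr L M ∧
  ∀ (N : Type u) [L.Structure N], L.ElementarilyEquivalent M N → MinimalStr L N

end Morley

section Theories

/-- A divisible Abelian group structure on a subset `S`, with addition `f`. -/
def DivAbGroupOn {α : Type*} (f : α → α → α) (S : Set α) : Prop :=
  (∀ x ∈ S, ∀ y ∈ S, f x y ∈ S) ∧
  (∀ x ∈ S, ∀ y ∈ S, f x y = f y x) ∧
  (∀ x ∈ S, ∀ y ∈ S, ∀ z ∈ S, f (f x y) z = f x (f y z)) ∧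
  (∃ e ∈ S, (∀ x ∈ S, f e x = x) ∧ (∀ x ∈ S, ∃ y ∈ S, f x y = e)) ∧
  (∀ k : ℕ, 0 < k → ∀ x ∈ S, ∃ y ∈ S, (f y)^[k - 1] y = x)

/-- Embedding of `M` into `M ∪ {±∞}`. -/
def emb {α : Type*} (x : α) : WithBot (WithTop α) := ((x : WithTop α) : WithBot (WithTop α))

/-- `M` is a model of the theory `T_m` of Proposition 3.17: a DLO with constants
`c_1 < ⋯ < c_{m-1}` (recorded here by the boundary sequence
`⊥ = c 0 < c 1 < ⋯ < c m = ⊤` in `M ∪ {±∞}`), such that `+` restricts to a divisible Abelian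
group on each interval `(c_{i-1}, c_i)` and is constantly `c_1` off the union of the
`(c_{i-1}, c_i)²`. -/
def ModelTm (m : ℕ) (hm : 0 < m) (L : FirstOrder.Language.{v, w}) (M : Type u)
    [L.Structure M] [LinearOrder M]
    (lt : L.Relations 2) (plus : L.Functions 2)
    (c : Fin (m + 1) → WithBot (WithTop M)) : Prop :=
  DenselyOrdered M ∧ NoMinOrder M ∧ NoMaxOrder M ∧ Nonempty M ∧
  (∀ x y : M, Structure.RelMap lt ![x, y] ↔ x < y) ∧
  c 0 = ⊥ ∧ c (Fin.last m) = ⊤ ∧ StrictMono c ∧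
  (∀ i : Fin (m + 1), i ≠ 0 → i ≠ Fin.last m → ∃ x : M, c i = emb x) ∧
  (∀ i : Fin m,
    DivAbGroupOn (fun x y : M => Structure.funMap plus ![x, y])
      {x : M | c i.castSucc < emb x ∧ emb x < c i.succ}) ∧
  (∀ x y : M,
    (¬ ∃ i : Fin m, (c i.castSucc < emb x ∧ emb x < c i.succ) ∧
        (c i.castSucc < emb y ∧ emb y < c i.succ)) →
    ∀ z : M, c ⟨1, by omega⟩ = emb z → Structure.funMap plus ![x, y] = z)

/-- The set of realizations of a unary predicate. -/
def relSet (L : FirstOrder.Language.{v, w}) (M : Type u) [L.Structure M]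
    (r : L.Relations 1) : Set M :=
  {x : M | Structure.RelMap r ![x]}

/-- `M` is a model of the theory `T_m` of Theorem 3.18: an ordered divisible Abelian group
with a strictly increasing chain of nontrivial proper convex subgroups `U_1 ⊊ ⋯ ⊊ U_m ⊊ M`. -/
def ModelTw (m : ℕ) (L : FirstOrder.Language.{v, w}) (M : Type u)
    [L.Structure M] [AddCommGroup M] [LinearOrder M] [IsOrderedAddMonoid M]
    (lt : L.Relations 2) (plus : L.Functions 2) (U : Fin m → L.Relations 1) : Prop :=
  (∀ x y : M, Structure.RelMap lt ![x, y] ↔ x < y) ∧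
  (∀ x y : M, Structure.funMap plus ![x, y] = x + y) ∧
  (∀ k : ℕ, 0 < k → ∀ x : M, ∃ y : M, k • y = x) ∧
  (∀ i : Fin m,
    (0 : M) ∈ relSet L M (U i) ∧
    (∀ x ∈ relSet L M (U i), ∀ y ∈ relSet L M (U i), x + y ∈ relSet L M (U i)) ∧
    (∀ x ∈ relSet L M (U i), -x ∈ relSet L M (U i)) ∧
    (relSet L M (U i)).OrdConnected ∧
    relSet L M (U i) ≠ {0} ∧ relSet L M (U i) ≠ Set.univ) ∧
  (∀ i j : Fin m, i < j → relSet L M (U i) ⊂ relSet L M (U j))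

end Theories


/-! ### Auxiliary lemmas for Statement 13 -/

section Aux13

variable {L : FirstOrder.Language.{v, w}} {M : Type u} [L.Structure M]

lemma definable_comp_elim {m n : ℕ} {S : Set (Fin m → M)}
    (hS : Set.Definable (Set.univ : Set M) L S) (f : Fin m → M ⊕ Fin n) :
    Set.Definable (Set.univ : Set M) L
      {v : Fin n → M | (fun i => Sum.elim (fun a => a) v (f i)) ∈ S} := by
  obtain ⟨φ, hφ⟩ := hS
  refine ⟨BoundedFormula.subst φ (fun i => (f i).elim
    (fun a => Constants.term (L.con (⟨a, Set.mem_univ a⟩ : (Set.univ : Set M))))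
    Term.var), ?_⟩
  ext v
  simp only [hφ, Set.mem_setOf_eq, Formula.Realize, BoundedFormula.realize_subst]
  have key : (fun i => Sum.elim (fun a => a) v (f i)) =
      (fun i => Term.realize v ((f i).elim
        (fun a => Constants.term (L.con (⟨a, Set.mem_univ a⟩ : (Set.univ : Set M))))
        Term.var)) := by
    funext i; cases h' : f i <;> simp [Term.realize_con]
  rw [key]

lemma defsub {m n : ℕ} {S : Set (Fin m → M)}
    (hS : Set.Definable (Set.univ : Set M) L S) (f : Fin m → M ⊕ Fin n)
    (T : Set (Fin n → M))
    (hT : {v : Fin n → M | (fun i => Sum.elim (fun a => a) v (f i)) ∈ S} = T) :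
    Set.Definable (Set.univ : Set M) L T := hT ▸ definable_comp_elim hS f

lemma fin1_eta (v : Fin 1 → M) : v = fun _ => v 0 :=
  funext fun i => congrArg v (Subsingleton.elim i 0)

lemma snoc_zero (x : Fin 1 → M) (t : M) : (Fin.snoc x t : Fin 2 → M) 0 = x 0 := by
  simp [Fin.snoc]

lemma snoc_one (x : Fin 1 → M) (t : M) : (Fin.snoc x t : Fin 2 → M) 1 = t := by
  simp [Fin.snoc]

lemma definable_single (a : M) :
    Set.Definable (Set.univ : Set M) L ({fun _ => a} : Set (Fin 1 → M)) := by
  have h0 : Set.Definable (Set.univ : Set M) L {v : Fin 2 → M | v 0 = v 1} :=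
    ⟨Term.equal (Term.var 0) (Term.var 1), by ext v; simp⟩
  refine defsub h0 ![Sum.inr 0, Sum.inl a] _ ?_
  ext v
  simp only [Set.mem_setOf_eq, Matrix.cons_val_zero, Matrix.cons_val_one, Matrix.head_cons,
    Sum.elim_inl, Sum.elim_inr, Set.mem_singleton_iff]
  exact ⟨fun h => by rw [fin1_eta v, h], fun h => by rw [h]⟩

variable {d : ∀ n : ℕ, DefSet L M (n + 1) → WithBot ℕ}

lemma dext (h2 : ∀ n, Cond2 d n) {n : ℕ} (X Y : DefSet L M (n + 1)) (h : X.1 = Y.1) :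
    d n X = d n Y := by
  have := h2 n Y Y X (by rw [h, Set.union_self])
  rw [this, max_self]

lemma dmono (h2 : Cond2 d 0) (X Y : DefSet L M 1) (h : X.1 ⊆ Y.1) : d 0 X ≤ d 0 Y := by
  have := h2 X Y Y (by rw [Set.union_eq_self_of_subset_left h])
  rw [this]; exact le_max_left _ _

lemma d_le_one (hd1 : Cond1 d) (h2 : Cond2 d 0) (X : DefSet L M 1) : d 0 X ≤ 1 :=
  le_trans (dmono h2 X ⟨Set.univ, Set.definable_univ⟩ (Set.subset_univ _))
    (le_of_eq (hd1.2.2 _ rfl))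

lemma d_nonneg (hd1 : Cond1 d) (h2 : Cond2 d 0) (X : DefSet L M 1) (hne : X.1.Nonempty) :
    0 ≤ d 0 X := by
  obtain ⟨v, hv⟩ := hne
  have hsub : ({fun _ => v 0} : Set (Fin 1 → M)) ⊆ X.1 := by
    intro y hy
    rw [Set.mem_singleton_iff] at hy
    rw [hy, ← fin1_eta v]; exact hv
  have := dmono h2 ⟨{fun _ => v 0}, definable_single (v 0)⟩ X hsub
  rwa [hd1.2.1 _ (v 0) rfl] at this

lemma d_zero_or_one (hd1 : Cond1 d) (h2 : Cond2 d 0) (X : DefSet L M 1) (hne : X.1.Nonempty) :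
    d 0 X = 0 ∨ d 0 X = 1 := by
  have h0 := d_nonneg hd1 h2 X hne
  have h1 := d_le_one hd1 h2 X
  set t := d 0 X with ht
  have hbot : t ≠ ⊥ := by
    intro h; rw [h] at h0; exact absurd h0 (by decide)
  obtain ⟨n, hn⟩ := WithBot.ne_bot_iff_exists.mp hbot
  have hn1 : n ≤ 1 := by
    rw [← hn] at h1; exact WithBot.coe_le_coe.mp h1
  rcases Nat.le_one_iff_eq_zero_or_eq_one.mp hn1 with rfl | rfl
  · left; rw [← hn]; rfl
  · right; rw [← hn]; rfl

/-- If all fibers of `G ⊆ M²` over points of `A` have dimension `i` and all other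
fibers are empty, then `dim G = dim A + i`. -/
lemma dim_of_fibers (hd1 : Cond1 d) (h2 : ∀ n, Cond2 d n) (h4 : ∀ n, Cond4 d n)
    (G : DefSet L M 2) (i : Fin 2) (A : DefSet L M 1)
    (hfib1 : ∀ x : Fin 1 → M, x ∈ A.1 →
      ∃ hf : Set.Definable (Set.univ : Set M) L (fiber G.1 x),
        d 0 ⟨fiber G.1 x, hf⟩ = ((i : ℕ) : WithBot ℕ))
    (hfib2 : ∀ x : Fin 1 → M, x ∉ A.1 → fiber G.1 x = ∅) :
    d 1 G = d 0 A + ((i : ℕ) : WithBot ℕ) := by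
  obtain ⟨Xi, W, hXi, hW, hdim⟩ := h4 0 G i
  have hXiA : Xi.1 = A.1 := by
    ext x
    simp only [hXi, Set.mem_setOf_eq]
    constructor
    · rintro ⟨hf, hv⟩
      by_contra hxA
      have hbb : d 0 ⟨fiber G.1 x, hf⟩ = ⊥ := hd1.1 _ (hfib2 x hxA)
      rw [hv] at hbb
      exact WithBot.coe_ne_bot hbb
    · intro hx; exact hfib1 x hx
  have hWG : W.1 = G.1 := by
    rw [hW]
    refine Set.inter_eq_self_of_subset_left ?_
    intro v hv
    simp only [Set.mem_preimage]
    rw [hXiA]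
    by_contra hxA
    have h0 := hfib2 _ hxA
    have hmem : (fun _ => v (Fin.last 1)) ∈ fiber G.1 (v ∘ Fin.castSucc) := by
      show Fin.snoc (v ∘ Fin.castSucc) (v (Fin.last 1)) ∈ G.1
      have he : Fin.snoc (v ∘ Fin.castSucc) (v (Fin.last 1)) = v := Fin.snoc_init_self v
      rw [he]; exact hv
    rw [h0] at hmem
    exact hmem
  calc d 1 G = d 1 W := (dext h2 W G hWG).symm
    _ = d 0 Xi + ((i : ℕ) : WithBot ℕ) := hdim
    _ = d 0 A + ((i : ℕ) : WithBot ℕ) := by rw [dext h2 Xi A hXiA]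

end Aux13

section Aux13Ord

variable {M : Type u} [LinearOrder M] [NoMinOrder M] [NoMaxOrder M]

lemma exists_Ioo_of_mem_open {U : Set M} (hU : (orderTop M).IsOpen U) {x : M} (hx : x ∈ U) :
    ∃ p q, p < x ∧ x < q ∧ Set.Ioo p q ⊆ U := by
  have hgen : TopologicalSpace.GenerateOpen
      {s : Set M | (∃ a, s = Set.Ioi a) ∨ (∃ a, s = Set.Iio a)} U := hU
  clear hU
  induction hgen with
  | basic s hs =>
    rcases hs with ⟨p, rfl⟩ | ⟨q, rfl⟩
    · obtain ⟨q, hq⟩ := exists_gt x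
      exact ⟨p, q, hx, hq, fun y hy => hy.1⟩
    · obtain ⟨p, hp⟩ := exists_lt x
      exact ⟨p, q, hp, hx, fun y hy => hy.2⟩
  | univ =>
    obtain ⟨p, hp⟩ := exists_lt x
    obtain ⟨q, hq⟩ := exists_gt x
    exact ⟨p, q, hp, hq, fun _ _ => trivial⟩
  | inter s t _ _ ihs iht =>
    obtain ⟨p1, q1, h11, h12, h13⟩ := ihs hx.1
    obtain ⟨p2, q2, h21, h22, h23⟩ := iht hx.2
    refine ⟨max p1 p2, min q1 q2, max_lt h11 h21, lt_min h12 h22, fun y hy => ?_⟩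
    exact ⟨h13 ⟨lt_of_le_of_lt (le_max_left _ _) hy.1, lt_of_lt_of_le hy.2 (min_le_left _ _)⟩,
      h23 ⟨lt_of_le_of_lt (le_max_right _ _) hy.1, lt_of_lt_of_le hy.2 (min_le_right _ _)⟩⟩
  | sUnion S _ ih =>
    obtain ⟨s, hsS, hxs⟩ := hx
    obtain ⟨p, q, h1, h2, h3⟩ := ih s hsS hxs
    exact ⟨p, q, h1, h2, h3.trans (Set.subset_sUnion_of_mem hsS)⟩

lemma exists_Ioo_subset {S : Set M} (h : (@interior M (orderTop M) S).Nonempty) :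
    ∃ p q : M, p < q ∧ Set.Ioo p q ⊆ S := by
  letI : TopologicalSpace M := orderTop M
  obtain ⟨x, hx⟩ := h
  have hop : (orderTop M).IsOpen (interior S) := isOpen_interior
  obtain ⟨p, q, hp, hq, hsub⟩ := exists_Ioo_of_mem_open hop hx
  exact ⟨p, q, hp.trans hq, hsub.trans interior_subset⟩

end Aux13Ord


section Aux13Grp

variable {L : FirstOrder.Language.{v, w}} {M : Type u} [L.Structure M]

section WithOrder

variable [LinearOrder M] [DenselyOrdered M] [NoMinOrder M] [NoMaxOrder M]
  [AddGroup M] [CovariantClass M M (· + ·) (· < ·)]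
  [CovariantClass M M (Function.swap (· + ·)) (· < ·)]

/-- The definable set `(c, ∞)`. -/
def IoiD (hlt : LtDefinable L M) (c : M) : DefSet L M 1 :=
  ⟨{v | c < v 0}, defsub hlt ![Sum.inl c, Sum.inr 0] {v : Fin 1 → M | c < v 0} (by ext v; simp)⟩

/-- The definable set `(-∞, c)`. -/
def IioD (hlt : LtDefinable L M) (c : M) : DefSet L M 1 :=
  ⟨{v | v 0 < c}, defsub hlt ![Sum.inr 0, Sum.inl c] {v : Fin 1 → M | v 0 < c} (by ext v; simp)⟩

/-- The definable set `(p, q)`. -/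
def IooD (hlt : LtDefinable L M) (p q : M) : DefSet L M 1 :=
  ⟨{v | p < v 0 ∧ v 0 < q},
    ((IoiD hlt p).2).inter ((IioD hlt q).2)⟩


variable {d : ∀ n : ℕ, DefSet L M (n + 1) → WithBot ℕ}

lemma coe_fin2_zero : (((0 : Fin 2) : ℕ) : WithBot ℕ) = 0 := by simp

lemma coe_fin2_one : (((1 : Fin 2) : ℕ) : WithBot ℕ) = 1 := by simp

lemma d_Iio_eq_Ioi (hlt : LtDefinable L M) (hadd : AddDefinable L M)
    (hd1 : Cond1 d) (h2 : ∀ n, Cond2 d n) (h3 : ∀ n, Cond3 d n) (h4 : ∀ n, Cond4 d n)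
    (c : M) : d 0 (IioD hlt c) = d 0 (IoiD hlt c) := by
  -- the reflection graph over `(c, ∞)`
  set G : DefSet L M 2 :=
    ⟨{v | v 0 + v 1 = c + c ∧ c < v 0},
      (defsub hadd ![Sum.inr 0, Sum.inr 1, Sum.inl (c + c)]
          {v : Fin 2 → M | v 0 + v 1 = c + c} (by ext v; simp)).inter
        (defsub hlt ![Sum.inl c, Sum.inr 0] {v : Fin 2 → M | c < v 0} (by ext v; simp))⟩
    with hGdef
  set Gσ : DefSet L M 2 :=
    ⟨{v | v 1 + v 0 = c + c ∧ c < v 1},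
      (defsub hadd ![Sum.inr 1, Sum.inr 0, Sum.inl (c + c)]
          {v : Fin 2 → M | v 1 + v 0 = c + c} (by ext v; simp)).inter
        (defsub hlt ![Sum.inl c, Sum.inr 1] {v : Fin 2 → M | c < v 1} (by ext v; simp))⟩
    with hGσdef
  have hσeq : Gσ.1 = {y : Fin 2 → M | y ∘ (Equiv.swap 0 1) ∈ G.1} := by
    ext y
    show (y 1 + y 0 = c + c ∧ c < y 1) ↔
      ((y ∘ (Equiv.swap (0 : Fin 2) 1)) 0 + (y ∘ (Equiv.swap (0 : Fin 2) 1)) 1 = c + c ∧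
        c < (y ∘ (Equiv.swap (0 : Fin 2) 1)) 0)
    have e0 : (y ∘ (Equiv.swap (0 : Fin 2) 1)) 0 = y 1 := by
      simp [Function.comp_apply, Equiv.swap_apply_left]
    have e1 : (y ∘ (Equiv.swap (0 : Fin 2) 1)) 1 = y 0 := by
      simp [Function.comp_apply, Equiv.swap_apply_right]
    rw [e0, e1]
  have e1 := h3 1 (Equiv.swap 0 1) G Gσ hσeq
  have e2 : d 1 G = d 0 (IoiD hlt c) + (((0 : Fin 2) : ℕ) : WithBot ℕ) := by
    refine dim_of_fibers hd1 h2 h4 G 0 (IoiD hlt c) ?_ ?_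
    · intro x hx
      have hfs : fiber G.1 x = ({fun _ => -(x 0) + (c + c)} : Set (Fin 1 → M)) := by
        ext y
        show ((Fin.snoc x (y 0) : Fin 2 → M) 0 + (Fin.snoc x (y 0) : Fin 2 → M) 1 = c + c ∧ c < (Fin.snoc x (y 0) : Fin 2 → M) 0) ↔ _
        rw [snoc_zero, snoc_one, Set.mem_singleton_iff]
        constructor
        · rintro ⟨h1, _⟩
          have hy : y 0 = -(x 0) + (c + c) := by
            rw [eq_neg_add_iff_add_eq]; exact h1
          rw [fin1_eta y, hy]
        · intro h
          have hy : y 0 = -(x 0) + (c + c) := by rw [h]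
          exact ⟨by rw [hy, add_neg_cancel_left], hx⟩
      have hf : Set.Definable (Set.univ : Set M) L (fiber G.1 x) := by
        rw [hfs]; exact definable_single _
      refine ⟨hf, ?_⟩
      have he : (⟨fiber G.1 x, hf⟩ : DefSet L M 1) =
          ⟨{fun _ => -(x 0) + (c + c)}, definable_single _⟩ := Subtype.ext hfs
      rw [he, hd1.2.1 _ _ rfl, coe_fin2_zero]
    · intro x hx
      ext y
      show ((Fin.snoc x (y 0) : Fin 2 → M) 0 + (Fin.snoc x (y 0) : Fin 2 → M) 1 = c + c ∧ c < (Fin.snoc x (y 0) : Fin 2 → M) 0) ↔ _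
      rw [snoc_zero, snoc_one]
      simp only [Set.mem_empty_iff_false, iff_false]
      rintro ⟨_, h2'⟩
      exact hx h2'
  have e3 : d 1 Gσ = d 0 (IioD hlt c) + (((0 : Fin 2) : ℕ) : WithBot ℕ) := by
    refine dim_of_fibers hd1 h2 h4 Gσ 0 (IioD hlt c) ?_ ?_
    · intro x hx
      have hx' : x 0 < c := hx
      have hfs : fiber Gσ.1 x = ({fun _ => (c + c) - x 0} : Set (Fin 1 → M)) := by
        ext y
        show ((Fin.snoc x (y 0) : Fin 2 → M) 1 + (Fin.snoc x (y 0) : Fin 2 → M) 0 = c + c ∧ c < (Fin.snoc x (y 0) : Fin 2 → M) 1) ↔ _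
        rw [snoc_zero, snoc_one, Set.mem_singleton_iff]
        constructor
        · rintro ⟨h1, _⟩
          have hy : y 0 = (c + c) - x 0 := by
            rw [eq_sub_iff_add_eq]; exact h1
          rw [fin1_eta y, hy]
        · intro h
          have hy : y 0 = (c + c) - x 0 := by rw [h]
          refine ⟨by rw [hy, sub_add_cancel], ?_⟩
          rw [hy, lt_sub_iff_add_lt]
          exact add_lt_add_right hx' c
      have hf : Set.Definable (Set.univ : Set M) L (fiber Gσ.1 x) := by
        rw [hfs]; exact definable_single _
      refine ⟨hf, ?_⟩
      have he : (⟨fiber Gσ.1 x, hf⟩ : DefSet L M 1) =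
          ⟨{fun _ => (c + c) - x 0}, definable_single _⟩ := Subtype.ext hfs
      rw [he, hd1.2.1 _ _ rfl, coe_fin2_zero]
    · intro x hx
      have hx' : ¬ x 0 < c := hx
      ext y
      show ((Fin.snoc x (y 0) : Fin 2 → M) 1 + (Fin.snoc x (y 0) : Fin 2 → M) 0 = c + c ∧ c < (Fin.snoc x (y 0) : Fin 2 → M) 1) ↔ _
      rw [snoc_zero, snoc_one]
      simp only [Set.mem_empty_iff_false, iff_false]
      rintro ⟨h1, h2'⟩
      apply hx'
      have hy : y 0 = (c + c) - x 0 := by rw [eq_sub_iff_add_eq]; exact h1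
      rw [hy, lt_sub_iff_add_lt] at h2'
      exact lt_of_add_lt_add_left h2'
  rw [e1, e2] at e3
  rw [coe_fin2_zero, add_zero, add_zero] at e3
  exact e3.symm

lemma d_Ioi_one (hlt : LtDefinable L M) (hadd : AddDefinable L M)
    (hd1 : Cond1 d) (h2 : ∀ n, Cond2 d n) (h3 : ∀ n, Cond3 d n) (h4 : ∀ n, Cond4 d n)
    (c : M) : d 0 (IoiD hlt c) = 1 := by
  have hIio := d_Iio_eq_Ioi hlt hadd hd1 h2 h3 h4 c
  set midD : DefSet L M 1 :=
    ⟨({fun _ => c} : Set (Fin 1 → M)) ∪ (IoiD hlt c).1,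
      (definable_single c).union (IoiD hlt c).2⟩ with hmidDdef
  have hm := h2 0 ⟨{fun _ => c}, definable_single c⟩ (IoiD hlt c) midD rfl
  have huE : (⟨Set.univ, Set.definable_univ⟩ : DefSet L M 1).1 = (IioD hlt c).1 ∪ midD.1 := by
    ext v
    simp only [Set.mem_univ, true_iff, Set.mem_union, Set.mem_setOf_eq, Set.mem_singleton_iff]
    rcases lt_trichotomy (v 0) c with h | h | h
    · exact Or.inl h
    · exact Or.inr (Or.inl (by rw [fin1_eta v, h]; exact rfl))
    · exact Or.inr (Or.inr h)
  have hu := h2 0 (IioD hlt c) midD ⟨Set.univ, Set.definable_univ⟩ huE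
  rw [hd1.2.2 _ rfl, hm, hd1.2.1 ⟨{fun _ => c}, definable_single c⟩ c rfl, hIio] at hu
  -- hu : 1 = max (d 0 (IoiD hlt c)) (max 0 (d 0 (IoiD hlt c)))
  have hmax : max (d 0 (IoiD hlt c)) (max 0 (d 0 (IoiD hlt c))) = max 0 (d 0 (IoiD hlt c)) :=
    max_eq_right (le_max_right _ _)
  rw [hmax] at hu
  rcases max_eq_iff.mp hu.symm with ⟨h, _⟩ | ⟨h, _⟩
  · exact absurd h (by decide)
  · exact h

lemma d_Ioo_add (hlt : LtDefinable L M) (hadd : AddDefinable L M)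
    (hd1 : Cond1 d) (h2 : ∀ n, Cond2 d n) (h3 : ∀ n, Cond3 d n) (h4 : ∀ n, Cond4 d n)
    (p q c : M) : d 0 (IooD hlt (p + c) (q + c)) = d 0 (IooD hlt p q) := by
  set G : DefSet L M 2 :=
    ⟨{v | (p < v 0 ∧ v 0 < q) ∧ v 0 + c = v 1},
      ((defsub hlt ![Sum.inl p, Sum.inr 0] {v : Fin 2 → M | p < v 0} (by ext v; simp)).inter
        (defsub hlt ![Sum.inr 0, Sum.inl q] {v : Fin 2 → M | v 0 < q} (by ext v; simp))).inter
        (defsub hadd ![Sum.inr 0, Sum.inl c, Sum.inr 1]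
          {v : Fin 2 → M | v 0 + c = v 1} (by ext v; simp))⟩ with hGdef
  set Gσ : DefSet L M 2 :=
    ⟨{v | (p < v 1 ∧ v 1 < q) ∧ v 1 + c = v 0},
      ((defsub hlt ![Sum.inl p, Sum.inr 1] {v : Fin 2 → M | p < v 1} (by ext v; simp)).inter
        (defsub hlt ![Sum.inr 1, Sum.inl q] {v : Fin 2 → M | v 1 < q} (by ext v; simp))).inter
        (defsub hadd ![Sum.inr 1, Sum.inl c, Sum.inr 0]
          {v : Fin 2 → M | v 1 + c = v 0} (by ext v; simp))⟩ with hGσdef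
  have hσeq : Gσ.1 = {y : Fin 2 → M | y ∘ (Equiv.swap 0 1) ∈ G.1} := by
    ext y
    show ((p < y 1 ∧ y 1 < q) ∧ y 1 + c = y 0) ↔
      ((p < (y ∘ (Equiv.swap (0 : Fin 2) 1)) 0 ∧ (y ∘ (Equiv.swap (0 : Fin 2) 1)) 0 < q) ∧
        (y ∘ (Equiv.swap (0 : Fin 2) 1)) 0 + c = (y ∘ (Equiv.swap (0 : Fin 2) 1)) 1)
    have e0 : (y ∘ (Equiv.swap (0 : Fin 2) 1)) 0 = y 1 := by
      simp [Function.comp_apply, Equiv.swap_apply_left]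
    have e1 : (y ∘ (Equiv.swap (0 : Fin 2) 1)) 1 = y 0 := by
      simp [Function.comp_apply, Equiv.swap_apply_right]
    rw [e0, e1]
  have e1 := h3 1 (Equiv.swap 0 1) G Gσ hσeq
  have e2 : d 1 G = d 0 (IooD hlt p q) + (((0 : Fin 2) : ℕ) : WithBot ℕ) := by
    refine dim_of_fibers hd1 h2 h4 G 0 (IooD hlt p q) ?_ ?_
    · intro x hx
      obtain ⟨hx1, hx2⟩ : p < x 0 ∧ x 0 < q := hx
      have hfs : fiber G.1 x = ({fun _ => x 0 + c} : Set (Fin 1 → M)) := by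
        ext y
        show ((p < (Fin.snoc x (y 0) : Fin 2 → M) 0 ∧ (Fin.snoc x (y 0) : Fin 2 → M) 0 < q) ∧
          (Fin.snoc x (y 0) : Fin 2 → M) 0 + c = (Fin.snoc x (y 0) : Fin 2 → M) 1) ↔ _
        rw [snoc_zero, snoc_one, Set.mem_singleton_iff]
        constructor
        · rintro ⟨_, h1⟩
          rw [fin1_eta y, ← h1]
        · intro h
          have hy : y 0 = x 0 + c := by rw [h]
          exact ⟨⟨hx1, hx2⟩, hy.symm⟩
      have hf : Set.Definable (Set.univ : Set M) L (fiber G.1 x) := by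
        rw [hfs]; exact definable_single _
      refine ⟨hf, ?_⟩
      have he : (⟨fiber G.1 x, hf⟩ : DefSet L M 1) =
          ⟨{fun _ => x 0 + c}, definable_single _⟩ := Subtype.ext hfs
      rw [he, hd1.2.1 _ _ rfl, coe_fin2_zero]
    · intro x hx
      ext y
      show ((p < (Fin.snoc x (y 0) : Fin 2 → M) 0 ∧ (Fin.snoc x (y 0) : Fin 2 → M) 0 < q) ∧
        (Fin.snoc x (y 0) : Fin 2 → M) 0 + c = (Fin.snoc x (y 0) : Fin 2 → M) 1) ↔ _
      rw [snoc_zero, snoc_one]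
      simp only [Set.mem_empty_iff_false, iff_false]
      rintro ⟨h1, _⟩
      exact hx h1
  have e3 : d 1 Gσ = d 0 (IooD hlt (p + c) (q + c)) + (((0 : Fin 2) : ℕ) : WithBot ℕ) := by
    refine dim_of_fibers hd1 h2 h4 Gσ 0 (IooD hlt (p + c) (q + c)) ?_ ?_
    · intro x hx
      obtain ⟨hx1, hx2⟩ : p + c < x 0 ∧ x 0 < q + c := hx
      have hfs : fiber Gσ.1 x = ({fun _ => x 0 - c} : Set (Fin 1 → M)) := by
        ext y
        show ((p < (Fin.snoc x (y 0) : Fin 2 → M) 1 ∧ (Fin.snoc x (y 0) : Fin 2 → M) 1 < q) ∧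
          (Fin.snoc x (y 0) : Fin 2 → M) 1 + c = (Fin.snoc x (y 0) : Fin 2 → M) 0) ↔ _
        rw [snoc_zero, snoc_one, Set.mem_singleton_iff]
        constructor
        · rintro ⟨_, h1⟩
          have hy : y 0 = x 0 - c := by rw [eq_sub_iff_add_eq]; exact h1
          rw [fin1_eta y, hy]
        · intro h
          have hy : y 0 = x 0 - c := by rw [h]
          refine ⟨⟨?_, ?_⟩, by rw [hy, sub_add_cancel]⟩
          · rw [hy, lt_sub_iff_add_lt]; exact hx1
          · rw [hy, sub_lt_iff_lt_add]; exact hx2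
      have hf : Set.Definable (Set.univ : Set M) L (fiber Gσ.1 x) := by
        rw [hfs]; exact definable_single _
      refine ⟨hf, ?_⟩
      have he : (⟨fiber Gσ.1 x, hf⟩ : DefSet L M 1) =
          ⟨{fun _ => x 0 - c}, definable_single _⟩ := Subtype.ext hfs
      rw [he, hd1.2.1 _ _ rfl, coe_fin2_zero]
    · intro x hx
      ext y
      show ((p < (Fin.snoc x (y 0) : Fin 2 → M) 1 ∧ (Fin.snoc x (y 0) : Fin 2 → M) 1 < q) ∧
        (Fin.snoc x (y 0) : Fin 2 → M) 1 + c = (Fin.snoc x (y 0) : Fin 2 → M) 0) ↔ _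
      rw [snoc_zero, snoc_one]
      simp only [Set.mem_empty_iff_false, iff_false]
      rintro ⟨⟨h1, h2'⟩, h3'⟩
      apply hx
      have hy : y 0 = x 0 - c := by rw [eq_sub_iff_add_eq]; exact h3'
      rw [hy, lt_sub_iff_add_lt] at h1
      rw [hy, sub_lt_iff_lt_add] at h2'
      exact ⟨h1, h2'⟩
  rw [e1, e2] at e3
  rw [coe_fin2_zero, add_zero, add_zero] at e3
  exact e3.symm

end WithOrder

end Aux13Grp


/-- Let `M` be a definably complete expansion of an ordered group and `dim`
a dimension function on `M`. Then `dim X = 1` for every definable subset `X` of `M` having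
nonempty interior in the order topology. -/
theorem statement_13 (L : FirstOrder.Language.{v, w}) (M : Type u) [L.Structure M]
    [LinearOrder M] [DenselyOrdered M] [NoMinOrder M] [NoMaxOrder M]
    [AddGroup M] [CovariantClass M M (· + ·) (· < ·)]
    [CovariantClass M M (Function.swap (· + ·)) (· < ·)]
    (hlt : LtDefinable L M) (hadd : AddDefinable L M) (hdc : DefinablyComplete L M)
    (d : ∀ n : ℕ, DefSet L M (n + 1) → WithBot ℕ) (hd : d ∈ DimFuns L M)
    (X : DefSet L M 1) (hint : (@interior M (orderTop M) (asSet1 X.1)).Nonempty) :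
    d 0 X = 1 := by
  obtain ⟨hd1, h2, h3, h4⟩ := hd
  obtain ⟨a, b, hab, hIoo⟩ := exists_Ioo_subset hint
  have hIsub : (IooD hlt a b).1 ⊆ X.1 := by
    intro v hv
    obtain ⟨hv1, hv2⟩ : a < v 0 ∧ v 0 < b := hv
    have hx : (fun _ => v 0) ∈ X.1 := hIoo ⟨hv1, hv2⟩
    rw [fin1_eta v]; exact hx
  have hne : (IooD hlt a b).1.Nonempty := by
    obtain ⟨m, hm1, hm2⟩ := exists_between hab
    exact ⟨fun _ => m, hm1, hm2⟩
  rcases d_zero_or_one hd1 (h2 0) _ hne with hI0 | hI1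
  · -- the case `dim (a,b) = 0` leads to a contradiction
    exfalso
    set Z : DefSet L M 2 :=
      ⟨{v | a < v 1 ∧ v 1 < v 0},
        (defsub hlt ![Sum.inl a, Sum.inr 1] {v : Fin 2 → M | a < v 1} (by ext v; simp)).inter
          (defsub hlt ![Sum.inr 1, Sum.inr 0] {v : Fin 2 → M | v 1 < v 0}
            (by ext v; simp))⟩ with hZdef
    obtain ⟨X0, W, hX0, hW, hdim⟩ := h4 0 Z 0
    have fibZ : ∀ x : Fin 1 → M, fiber Z.1 x = {y : Fin 1 → M | a < y 0 ∧ y 0 < x 0} := by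
      intro x; ext y
      show (a < (Fin.snoc x (y 0) : Fin 2 → M) 1 ∧
          (Fin.snoc x (y 0) : Fin 2 → M) 1 < (Fin.snoc x (y 0) : Fin 2 → M) 0) ↔ _
      rw [snoc_zero, snoc_one]
      exact Iff.rfl
    have hmemX0 : ∀ x : Fin 1 → M,
        (x ∈ X0.1 ↔ (a < x 0 ∧ d 0 (IooD hlt a (x 0)) = 0)) := by
      intro x
      rw [hX0]
      simp only [Set.mem_setOf_eq]
      constructor
      · rintro ⟨hf, hv⟩
        have hax : a < x 0 := by
          by_contra hax
          have he : fiber Z.1 x = ∅ := by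
            rw [fibZ x]; ext y
            simp only [Set.mem_setOf_eq, Set.mem_empty_iff_false, iff_false]
            rintro ⟨hy1, hy2⟩
            exact hax (hy1.trans hy2)
          have hbb := hd1.1 ⟨fiber Z.1 x, hf⟩ he
          exact WithBot.coe_ne_bot (hv.symm.trans hbb)
        refine ⟨hax, ?_⟩
        have he : (⟨fiber Z.1 x, hf⟩ : DefSet L M 1) = IooD hlt a (x 0) :=
          Subtype.ext (fibZ x)
        rw [← he, hv, coe_fin2_zero]
      · rintro ⟨hax, hv⟩
        have hf : Set.Definable (Set.univ : Set M) L (fiber Z.1 x) := by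
          rw [fibZ x]; exact (IooD hlt a (x 0)).2
        refine ⟨hf, ?_⟩
        have he : (⟨fiber Z.1 x, hf⟩ : DefSet L M 1) = IooD hlt a (x 0) :=
          Subtype.ext (fibZ x)
        rw [he, hv, coe_fin2_zero]
    have hAiff : ∀ m : M, (m ∈ asSet1 X0.1 ↔ a < m ∧ d 0 (IooD hlt a m) = 0) :=
      fun m => hmemX0 (fun _ => m)
    have hb : b ∈ asSet1 X0.1 := (hAiff b).mpr ⟨hab, hI0⟩
    have hdown : ∀ m ∈ asSet1 X0.1, ∀ m', a < m' → m' ≤ m → m' ∈ asSet1 X0.1 := by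
      intro m hm m' ham' hm'm
      obtain ⟨_, hm0⟩ := (hAiff m).mp hm
      refine (hAiff m').mpr ⟨ham', ?_⟩
      have hsub : (IooD hlt a m').1 ⊆ (IooD hlt a m).1 := by
        rintro y ⟨hy1, hy2⟩
        exact ⟨hy1, lt_of_lt_of_le hy2 hm'm⟩
      have hle := dmono (h2 0) _ _ hsub
      rw [hm0] at hle
      have hge := d_nonneg hd1 (h2 0) (IooD hlt a m')
        (by obtain ⟨t, ht1, ht2⟩ := exists_between ham'; exact ⟨fun _ => t, ht1, ht2⟩)
      exact le_antisymm hle hge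
    have hstep : ∀ m ∈ asSet1 X0.1, ((b - a) + m) ∈ asSet1 X0.1 := by
      intro m hm
      obtain ⟨ham, hm0⟩ := (hAiff m).mp hm
      have hmlt : m < (b - a) + m := by
        have h0 : (0 : M) < b - a := sub_pos.mpr hab
        calc m = 0 + m := (zero_add m).symm
          _ < (b - a) + m := add_lt_add_left h0 m
      have htr : d 0 (IooD hlt m ((b - a) + m)) = 0 := by
        have htl := d_Ioo_add hlt hadd hd1 h2 h3 h4 a b (-a + m)
        rw [hI0] at htl
        have ea : a + (-a + m) = m := add_neg_cancel_left a m
        have eb : b + (-a + m) = (b - a) + m := by rw [← add_assoc, ← sub_eq_add_neg]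
        rw [ea, eb] at htl
        exact htl
      refine (hAiff _).mpr ⟨ham.trans hmlt, ?_⟩
      have hU : (IooD hlt a ((b - a) + m)).1 =
          (IooD hlt a m).1 ∪ (({fun _ => m} : Set (Fin 1 → M)) ∪ (IooD hlt m ((b - a) + m)).1) := by
        ext v
        constructor
        · rintro ⟨h1, h2'⟩
          rcases lt_trichotomy (v 0) m with h | h | h
          · exact Or.inl ⟨h1, h⟩
          · exact Or.inr (Or.inl (by rw [fin1_eta v, h]; rfl))
          · exact Or.inr (Or.inr ⟨h, h2'⟩)
        · rintro (⟨h1, h2'⟩ | h | ⟨h1, h2'⟩)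
          · exact ⟨h1, h2'.trans hmlt⟩
          · have hv0 : v 0 = m := by
              have := Set.mem_singleton_iff.mp h
              rw [this]
            exact ⟨hv0 ▸ ham, hv0 ▸ hmlt⟩
          · exact ⟨ham.trans h1, h2'⟩
      have h2a := h2 0 ⟨{fun _ => m}, definable_single m⟩ (IooD hlt m ((b - a) + m))
        ⟨({fun _ => m} : Set (Fin 1 → M)) ∪ (IooD hlt m ((b - a) + m)).1,
          (definable_single m).union (IooD hlt m ((b - a) + m)).2⟩ rfl
      have h2b := h2 0 (IooD hlt a m)
        ⟨({fun _ => m} : Set (Fin 1 → M)) ∪ (IooD hlt m ((b - a) + m)).1,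
          (definable_single m).union (IooD hlt m ((b - a) + m)).2⟩
        (IooD hlt a ((b - a) + m)) hU
      rw [h2b, h2a, hm0, htr, hd1.2.1 ⟨{fun _ => m}, definable_single m⟩ m rfl]
      simp
    have hnb : ¬ BddAbove (asSet1 X0.1) := by
      intro hbdd
      obtain ⟨s, hs⟩ := (hdc X0).1 ⟨b, hb⟩ hbdd
      have h0 : (0 : M) < b - a := sub_pos.mpr hab
      have hts : -(b - a) + s < s := by
        calc -(b - a) + s < 0 + s := add_lt_add_left (neg_lt_zero.mpr h0) s
          _ = s := zero_add s
      obtain ⟨m, hmA, hml⟩ : ∃ m ∈ asSet1 X0.1, -(b - a) + s < m := by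
        by_contra hc
        push_neg at hc
        exact absurd (hs.2 hc) (not_le.mpr hts)
      have hslt : s < (b - a) + m := by
        calc s = (b - a) + (-(b - a) + s) := (add_neg_cancel_left _ _).symm
          _ < (b - a) + m := add_lt_add_right hml _
      exact absurd (hs.1 (hstep m hmA)) (not_le.mpr hslt)
    have hX0set : X0.1 = (IoiD hlt a).1 := by
      ext v
      constructor
      · intro hv; exact ((hmemX0 v).mp hv).1
      · intro hv
        rw [not_bddAbove_iff] at hnb
        obtain ⟨m, hmA, hml⟩ := hnb (v 0)
        have hv' := hdown m hmA (v 0) hv (le_of_lt hml)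
        rw [fin1_eta v]; exact hv'
    have hdX0 : d 0 X0 = 1 := by
      rw [dext h2 X0 (IoiD hlt a) hX0set]
      exact d_Ioi_one hlt hadd hd1 h2 h3 h4 a
    have hWZ : W.1 = Z.1 := by
      rw [hW]
      refine Set.inter_eq_self_of_subset_left ?_
      rintro v ⟨hv1, hv2⟩
      simp only [Set.mem_preimage]
      rw [hX0set]
      show a < (v ∘ Fin.castSucc) 0
      have hc0 : (v ∘ Fin.castSucc) 0 = v 0 := by simp
      rw [hc0]
      exact hv1.trans hv2
    have hdZ : d 1 Z = 1 := by
      have hth : d 1 Z = d 0 X0 + (((0 : Fin 2) : ℕ) : WithBot ℕ) :=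
        (dext h2 Z W hWZ.symm).trans hdim
      rw [hdX0, coe_fin2_zero, add_zero] at hth
      exact hth
    set Zσ : DefSet L M 2 :=
      ⟨{v | a < v 0 ∧ v 0 < v 1},
        (defsub hlt ![Sum.inl a, Sum.inr 0] {v : Fin 2 → M | a < v 0} (by ext v; simp)).inter
          (defsub hlt ![Sum.inr 0, Sum.inr 1] {v : Fin 2 → M | v 0 < v 1}
            (by ext v; simp))⟩ with hZσdef
    have hσeq : Zσ.1 = {y : Fin 2 → M | y ∘ (Equiv.swap 0 1) ∈ Z.1} := by
      ext y
      show (a < y 0 ∧ y 0 < y 1) ↔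
        (a < (y ∘ (Equiv.swap (0 : Fin 2) 1)) 1 ∧
          (y ∘ (Equiv.swap (0 : Fin 2) 1)) 1 < (y ∘ (Equiv.swap (0 : Fin 2) 1)) 0)
      have e0 : (y ∘ (Equiv.swap (0 : Fin 2) 1)) 0 = y 1 := by
        simp [Function.comp_apply, Equiv.swap_apply_left]
      have e1 : (y ∘ (Equiv.swap (0 : Fin 2) 1)) 1 = y 0 := by
        simp [Function.comp_apply, Equiv.swap_apply_right]
      rw [e0, e1]
    have hdZσ : d 1 Zσ = 1 := by
      rw [h3 1 (Equiv.swap 0 1) Z Zσ hσeq]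
      exact hdZ
    have fibZσ : ∀ x : Fin 1 → M,
        fiber Zσ.1 x = {y : Fin 1 → M | a < x 0 ∧ x 0 < y 0} := by
      intro x; ext y
      show (a < (Fin.snoc x (y 0) : Fin 2 → M) 0 ∧
          (Fin.snoc x (y 0) : Fin 2 → M) 0 < (Fin.snoc x (y 0) : Fin 2 → M) 1) ↔ _
      rw [snoc_zero, snoc_one]
      exact Iff.rfl
    have hfin : d 1 Zσ = d 0 (IoiD hlt a) + (((1 : Fin 2) : ℕ) : WithBot ℕ) := by
      refine dim_of_fibers hd1 h2 h4 Zσ 1 (IoiD hlt a) ?_ ?_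
      · intro x hx
        have hx' : a < x 0 := hx
        have hfs : fiber Zσ.1 x = (IoiD hlt (x 0)).1 := by
          rw [fibZσ x]; ext y
          exact ⟨fun h => h.2, fun h => ⟨hx', h⟩⟩
        have hf : Set.Definable (Set.univ : Set M) L (fiber Zσ.1 x) := by
          rw [hfs]; exact (IoiD hlt (x 0)).2
        refine ⟨hf, ?_⟩
        have he : (⟨fiber Zσ.1 x, hf⟩ : DefSet L M 1) = IoiD hlt (x 0) := Subtype.ext hfs
        rw [he, d_Ioi_one hlt hadd hd1 h2 h3 h4 (x 0), coe_fin2_one]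
      · intro x hx
        have hx' : ¬ a < x 0 := hx
        rw [fibZσ x]; ext y
        simp only [Set.mem_setOf_eq, Set.mem_empty_iff_false, iff_false]
        rintro ⟨hy1, _⟩
        exact hx' hy1
    rw [hdZσ, d_Ioi_one hlt hadd hd1 h2 h3 h4 a, coe_fin2_one] at hfin
    exact absurd hfin (by decide)
  · have hle := dmono (h2 0) (IooD hlt a b) X hIsub
    rw [hI1] at hle
    exact le_antisymm (d_le_one hd1 (h2 0) X) hle


end PaperDim
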